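/- Let A ∈ B(E,F) have generalized inverse A⁺, and T ∈ B(E,F) with ‖T − A‖ < ‖A⁺‖⁻¹. Then R(T) ∩ N(A⁺) = {0} if and only if B = A⁺ C_A(A⁺,T)⁻¹ is a generalized inverse of T (i.e., T B T = T and B T B = B). -/

import Mathlib

open ContinuousLinearMap

variable {E F : Type*} [NormedAddCommGroup E] [NormedSpace ℝ E] [CompleteSpace E]
  [NormedAddCommGroup F] [NormedSpace ℝ F] [CompleteSpace F]

theorem stmt3 (A T : E →L[ℝ] F) (Ap : F →L[ℝ] E)
    (h1 : A ∘L (Ap ∘L A) = A) (h2 : Ap ∘L (A ∘L Ap) = Ap)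
    (hT : ‖T - A‖ < ‖Ap‖⁻¹)
    (B : F →L[ℝ] E)
    (hB : B = Ap ∘L Ring.inverse (ContinuousLinearMap.id ℝ F + (T - A) ∘L Ap)) :
    LinearMap.range (T : E →ₗ[ℝ] F) ⊓ LinearMap.ker (Ap : F →ₗ[ℝ] E) = ⊥ ↔
      (T ∘L (B ∘L T) = T ∧ B ∘L (T ∘L B) = B) := by
  have hAp : 0 < ‖Ap‖ := by
    rcases eq_or_lt_of_le (norm_nonneg Ap) with h | h
    · exfalso
      rw [← h] at hT
      simp at hT
      exact absurd hT (norm_nonneg _).not_gt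
    · exact h
  have hrn : ‖(T - A) ∘L Ap‖ < 1 := by
    calc ‖(T - A) ∘L Ap‖ ≤ ‖T - A‖ * ‖Ap‖ := opNorm_comp_le _ _
    _ < ‖Ap‖⁻¹ * ‖Ap‖ := mul_lt_mul_of_pos_right hT hAp
    _ = 1 := inv_mul_cancel₀ (ne_of_gt hAp)
  set C : F →L[ℝ] F := ContinuousLinearMap.id ℝ F + (T - A) ∘L Ap with hCdef
  have hC : IsUnit C := by
    refine ⟨Units.oneSub (-((T - A) ∘L Ap)) (by rwa [norm_neg]), ?_⟩
    show 1 - (-((T - A) ∘L Ap)) = C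
    rw [hCdef, sub_neg_eq_add, one_def]
  have key : ∃ D : F →L[ℝ] F, (∀ y, C (D y) = y) ∧ (∀ y, D (C y) = y) ∧
      B = Ap ∘L D := by
    obtain ⟨u, hu⟩ := hC
    refine ⟨↑u⁻¹, ?_, ?_, ?_⟩
    · intro y
      have h : C * ↑u⁻¹ = 1 := by rw [← hu]; exact u.mul_inv
      simpa [mul_apply] using ContinuousLinearMap.ext_iff.1 h y
    · intro y
      have h : (↑u⁻¹ : F →L[ℝ] F) * C = 1 := by rw [← hu]; exact u.inv_mul
      simpa [mul_apply] using ContinuousLinearMap.ext_iff.1 h y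
    · rw [hB, ← hu, Ring.inverse_unit]
  obtain ⟨D, hCD, hDC, hBD⟩ := key
  have hCapp : ∀ y, C y = y + (T (Ap y) - A (Ap y)) := by
    intro y
    simp [hCdef]
  have h2' : ∀ z, Ap (A (Ap z)) = Ap z := by
    intro z
    simpa using ContinuousLinearMap.ext_iff.1 h2 z
  have hApQ : ∀ z : F, Ap (z - A (Ap z)) = 0 := by
    intro z
    rw [map_sub, h2', sub_self]
  have hQfix : ∀ z : F, D (z - A (Ap z)) = z - A (Ap z) := by
    intro z
    have hc : C (z - A (Ap z)) = z - A (Ap z) := by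
      rw [hCapp, hApQ, map_zero, map_zero, sub_zero, add_zero]
    have := hDC (z - A (Ap z))
    rwa [hc] at this
  have hBapp : ∀ y, B y = Ap (D y) := by
    intro y
    rw [hBD, ContinuousLinearMap.comp_apply]
  have hTBapp : ∀ y, T (B y) = y - (D y - A (Ap (D y))) := by
    intro y
    rw [hBapp]
    have h := hCD y
    rw [hCapp] at h
    rw [eq_sub_iff_add_eq]
    conv_rhs => rw [← h]
    abel
  have hBTB : ∀ y, B (T (B y)) = B y := by
    intro y
    rw [hTBapp y, map_sub, hBapp (D y - A (Ap (D y))), hQfix, hApQ, sub_zero]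
  constructor
  · intro hinf
    have hTBT : ∀ x, T (B (T x)) = T x := by
      intro x
      have hy : (T x - T (B (T x))) ∈ LinearMap.range (T : E →ₗ[ℝ] F) ⊓ LinearMap.ker (Ap : F →ₗ[ℝ] E) := by
        refine Submodule.mem_inf.2 ⟨LinearMap.mem_range.2 ⟨x - B (T x), by
          simp [map_sub]⟩, LinearMap.mem_ker.2 ?_⟩
        show Ap (T x - T (B (T x))) = 0
        rw [hTBapp (T x)]
        have h : T x - (T x - (D (T x) - A (Ap (D (T x))))) =
            D (T x) - A (Ap (D (T x))) := by abel
        rw [h, hApQ]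
      rw [hinf] at hy
      have h0 : T x - T (B (T x)) = 0 := (Submodule.mem_bot ℝ).1 hy
      exact (sub_eq_zero.1 h0).symm
    refine ⟨?_, ?_⟩
    · ext x
      exact hTBT x
    · ext y
      exact hBTB y
  · rintro ⟨hTBT, -⟩
    rw [Submodule.eq_bot_iff]
    rintro y hy
    obtain ⟨hy1, hy2⟩ := Submodule.mem_inf.1 hy
    obtain ⟨x, rfl⟩ := LinearMap.mem_range.1 hy1
    have hy2' : Ap (T x) = 0 := hy2
    have hCy : C (T x) = T x := by
      rw [hCapp, hy2', map_zero, map_zero, sub_zero, add_zero]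
    have hDy : D (T x) = T x := by
      have := hDC (T x)
      rwa [hCy] at this
    have happ : T (B (T x)) = T x := by
      simpa using ContinuousLinearMap.ext_iff.1 hTBT x
    have hzero : T (B (T x)) = 0 := by
      rw [hTBapp, hDy, hy2', map_zero, sub_zero, sub_self]
    rw [happ] at hzero
    exact hzero
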